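/- Let K > 1, a > 0 and A > 0, and let f : [A/K, ∞) → [0, ∞) and g : [A, ∞) → [0, ∞) be measurable functions such that (i) f(α) ≤ K^{−a}/2 for all α ≥ A/K, (ii) f(α) ≤ f(α/K)² + g(α) for all α ≥ A, and (iii) ∫_A^∞ α^{a−1} g(α) dα < ∞. Then ∫_A^∞ α^{a−1} f(α) dα < ∞. -/

import Mathlib

open MeasureTheory

/-- Deterministic integral lemma behind Theorem 1(ii) (moment bounds): if
`f ≤ K^(-a)/2` on `[A/K, ∞)`, `f(α) ≤ f(α/K)² + g(α)` on `[A, ∞)`, and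
`∫_A^∞ α^(a-1) g(α) dα < ∞`, then `∫_A^∞ α^(a-1) f(α) dα < ∞`. -/
theorem integral_bootstrap (K a A : ℝ) (hK : 1 < K) (ha : 0 < a) (hA : 0 < A)
    (f g : ℝ → ℝ) (hf_meas : Measurable f) (hg_meas : Measurable g)
    (hf_nonneg : ∀ α, A / K ≤ α → 0 ≤ f α)
    (hg_nonneg : ∀ α, A ≤ α → 0 ≤ g α)
    (hf_small : ∀ α, A / K ≤ α → f α ≤ K ^ (-a) / 2)
    (hrec : ∀ α, A ≤ α → f α ≤ (f (α / K)) ^ 2 + g α)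
    (hg_int : IntegrableOn (fun α => α ^ (a - 1) * g α) (Set.Ici A)) :
    IntegrableOn (fun α => α ^ (a - 1) * f α) (Set.Ici A) := by
  have hK0 : (0 : ℝ) < K := lt_trans one_pos hK
  have hAK0 : 0 < A / K := div_pos hA hK0
  have hAKA : A / K ≤ A := by
    rw [div_le_iff₀ hK0]; nlinarith
  set M : ℝ := K ^ (-a) / 2 with hM
  have hM0 : 0 < M := by positivity
  set φ : ℝ → ℝ := fun β => β ^ (a - 1) * f β with hφdef
  have hφ_meas : Measurable φ := (by fun_prop : Measurable fun x : ℝ => x ^ (a - 1)).mul hf_meas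
  -- pointwise nonnegativity of φ on (A/K, ∞)
  have hφ_nonneg : ∀ x, A / K ≤ x → 0 ≤ φ x := by
    intro x hx
    have hx0 : 0 ≤ x := le_trans hAK0.le hx
    exact mul_nonneg (Real.rpow_nonneg hx0 _) (hf_nonneg x hx)
  -- rpow bound on an interval
  have hrpow_bd : ∀ x s t : ℝ, 0 < s → s ≤ x → x ≤ t →
      x ^ (a - 1) ≤ s ^ (a - 1) + t ^ (a - 1) := by
    intro x s t hs hsx hxt
    have hx0 : 0 < x := lt_of_lt_of_le hs hsx
    rcases le_or_gt 0 (a - 1) with h | h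
    · have h1 : x ^ (a - 1) ≤ t ^ (a - 1) := Real.rpow_le_rpow hx0.le hxt h
      have h2 : 0 ≤ s ^ (a - 1) := Real.rpow_nonneg hs.le _
      linarith
    · have h1 : x ^ (a - 1) ≤ s ^ (a - 1) := Real.rpow_le_rpow_of_nonpos hs hsx h.le
      have h2 : 0 ≤ t ^ (a - 1) := Real.rpow_nonneg (le_trans hx0.le hxt) _
      linarith
  -- integrability of φ on any Ioc s t with A/K ≤ s
  have hInt : ∀ s t : ℝ, A / K ≤ s → IntegrableOn φ (Set.Ioc s t) := by
    intro s t hs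
    have hs0 : 0 < s := lt_of_lt_of_le hAK0 hs
    apply Measure.integrableOn_of_bounded (M := (s ^ (a - 1) + t ^ (a - 1)) * M)
      measure_Ioc_lt_top.ne hφ_meas.aestronglyMeasurable
    refine (ae_restrict_iff' measurableSet_Ioc).2 (Filter.Eventually.of_forall ?_)
    intro x hx
    have hxAK : A / K ≤ x := le_trans hs hx.1.le
    rw [Real.norm_of_nonneg (hφ_nonneg x hxAK)]
    have h1 : x ^ (a - 1) ≤ s ^ (a - 1) + t ^ (a - 1) :=
      hrpow_bd x s t hs0 hx.1.le hx.2
    have h2 : f x ≤ M := hf_small x hxAK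
    have h3 : 0 ≤ f x := hf_nonneg x hxAK
    have h4 : 0 ≤ x ^ (a - 1) := Real.rpow_nonneg (le_trans hs0.le hx.1.le) _
    calc φ x = x ^ (a - 1) * f x := rfl
      _ ≤ (s ^ (a - 1) + t ^ (a - 1)) * M := mul_le_mul h1 h2 h3 (by linarith)
  -- integrability of x ↦ φ (x / K) on Ioc A t
  have hInt' : ∀ t : ℝ, IntegrableOn (fun x => φ (x / K)) (Set.Ioc A t) := by
    intro t
    apply Measure.integrableOn_of_bounded
      (M := ((A / K) ^ (a - 1) + (t / K) ^ (a - 1)) * M)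
      measure_Ioc_lt_top.ne
      ((hφ_meas.comp (measurable_id.div_const K)).aestronglyMeasurable)
    refine (ae_restrict_iff' measurableSet_Ioc).2 (Filter.Eventually.of_forall ?_)
    intro x hx
    show ‖φ (x / K)‖ ≤ ((A / K) ^ (a - 1) + (t / K) ^ (a - 1)) * M
    have hxK : A / K ≤ x / K := by gcongr; exact hx.1.le
    have hxK2 : x / K ≤ t / K := by gcongr; exact hx.2
    rw [Real.norm_of_nonneg (hφ_nonneg _ hxK)]
    have h1 : (x / K) ^ (a - 1) ≤ (A / K) ^ (a - 1) + (t / K) ^ (a - 1) :=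
      hrpow_bd _ _ _ hAK0 hxK hxK2
    have h2 : f (x / K) ≤ M := hf_small _ hxK
    have h3 : 0 ≤ f (x / K) := hf_nonneg _ hxK
    have h4 : 0 ≤ (A / K) ^ (a - 1) := Real.rpow_nonneg hAK0.le _
    exact mul_le_mul h1 h2 h3 (by
      have := Real.rpow_nonneg (le_trans hAK0.le hxK) (a - 1); linarith)
  set J : ℝ := ∫ x in Set.Ioc (A / K) A, φ x with hJ
  set G : ℝ := ∫ x in Set.Ici A, x ^ (a - 1) * g x with hG
  -- key inequality
  have key : ∀ R : ℝ, A ≤ R → (∫ x in Set.Ioc A R, φ x) ≤ J + 2 * G := by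
    intro R hR
    set I : ℝ := ∫ x in Set.Ioc A R, φ x with hI
    have hIntAR : IntegrableOn φ (Set.Ioc A R) := hInt A R hAKA
    -- pointwise bound on Ioc A R
    have hpt : ∀ x ∈ Set.Ioc A R,
        φ x ≤ M * (K ^ (a - 1) * φ (x / K)) + x ^ (a - 1) * g x := by
      intro x hx
      have hxA : A ≤ x := hx.1.le
      have hx0 : 0 < x := lt_of_lt_of_le hA hxA
      have hxK : A / K ≤ x / K := by gcongr
      have h1 : f x ≤ f (x / K) ^ 2 + g x := hrec x hxA
      have h2 : f (x / K) ^ 2 ≤ M * f (x / K) := by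
        have := hf_small _ hxK
        have := hf_nonneg _ hxK
        nlinarith
      have h4 : (0 : ℝ) ≤ x ^ (a - 1) := Real.rpow_nonneg hx0.le _
      have hdiv : x ^ (a - 1) = K ^ (a - 1) * (x / K) ^ (a - 1) := by
        rw [Real.div_rpow hx0.le hK0.le]
        field_simp
      calc φ x = x ^ (a - 1) * f x := rfl
        _ ≤ x ^ (a - 1) * (f (x / K) ^ 2 + g x) := by
            exact mul_le_mul_of_nonneg_left h1 h4
        _ = x ^ (a - 1) * f (x / K) ^ 2 + x ^ (a - 1) * g x := by ring
        _ ≤ x ^ (a - 1) * (M * f (x / K)) + x ^ (a - 1) * g x := by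
            have := mul_le_mul_of_nonneg_left h2 h4; linarith
        _ = M * (K ^ (a - 1) * φ (x / K)) + x ^ (a - 1) * g x := by
            rw [hdiv]; simp only [hφdef]; ring
    -- integrability of RHS
    have hIg : IntegrableOn (fun x => x ^ (a - 1) * g x) (Set.Ioc A R) :=
      hg_int.mono_set (fun x hx => hx.1.le)
    have hIφK : IntegrableOn (fun x => M * (K ^ (a - 1) * φ (x / K))) (Set.Ioc A R) :=
      ((hInt' R).const_mul _).const_mul _
    have hmono : I ≤ ∫ x in Set.Ioc A R,
        (M * (K ^ (a - 1) * φ (x / K)) + x ^ (a - 1) * g x) := by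
      apply setIntegral_mono_on hIntAR (hIφK.add hIg) measurableSet_Ioc hpt
    have hsplit : (∫ x in Set.Ioc A R,
        (M * (K ^ (a - 1) * φ (x / K)) + x ^ (a - 1) * g x))
        = M * K ^ (a - 1) * (∫ x in Set.Ioc A R, φ (x / K))
          + ∫ x in Set.Ioc A R, x ^ (a - 1) * g x := by
      rw [integral_add (((hInt' R).const_mul _).const_mul _) hIg,
        integral_const_mul, integral_const_mul]
      ring
    -- the g part is at most G
    have hgle : (∫ x in Set.Ioc A R, x ^ (a - 1) * g x) ≤ G := by
      apply setIntegral_mono_set hg_int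
      · refine (ae_restrict_iff' measurableSet_Ici).2 (Filter.Eventually.of_forall ?_)
        intro x hx
        exact mul_nonneg (Real.rpow_nonneg (le_trans hA.le hx) _) (hg_nonneg x hx)
      · exact Filter.Eventually.of_forall (fun x hx => hx.1.le)
    -- change of variables
    have hcov : (∫ x in Set.Ioc A R, φ (x / K))
        = K * ∫ x in Set.Ioc (A / K) (R / K), φ x := by
      rw [← intervalIntegral.integral_of_le hR,
        intervalIntegral.integral_comp_div (f := φ) (ne_of_gt hK0),
        intervalIntegral.integral_of_le (by gcongr)]
      rw [smul_eq_mul]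
    -- bound the transported integral
    have hRK : R / K ≤ R := by
      rw [div_le_iff₀ hK0]
      nlinarith [lt_of_lt_of_le hA hR]
    have hsub : (∫ x in Set.Ioc (A / K) (R / K), φ x)
        ≤ ∫ x in Set.Ioc (A / K) R, φ x := by
      apply setIntegral_mono_set (hInt _ _ le_rfl)
      · refine (ae_restrict_iff' measurableSet_Ioc).2 (Filter.Eventually.of_forall ?_)
        intro x hx
        exact hφ_nonneg x hx.1.le
      · exact Filter.Eventually.of_forall
          (fun x hx => ⟨hx.1, le_trans hx.2 hRK⟩)
    have hunion : (∫ x in Set.Ioc (A / K) R, φ x) = J + I := by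
      rw [hJ, hI, ← setIntegral_union (Set.Ioc_disjoint_Ioc_of_le le_rfl) measurableSet_Ioc
        (hInt _ _ le_rfl) hIntAR, Set.Ioc_union_Ioc_eq_Ioc hAKA hR]
    -- combine
    have hMK : M * K ^ (a - 1) * K = 1 / 2 := by
      have h1 : K ^ (a - 1) * K = K ^ a := by
        rw [← Real.rpow_add_one (ne_of_gt hK0) (a - 1)]
        norm_num
      have h2 : (K : ℝ) ^ (-a) * K ^ a = 1 := by
        rw [← Real.rpow_add hK0]; simp
      calc M * K ^ (a - 1) * K = M * (K ^ (a - 1) * K) := by ring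
        _ = K ^ (-a) / 2 * K ^ a := by rw [h1]
        _ = K ^ (-a) * K ^ a / 2 := by ring
        _ = 1 / 2 := by rw [h2]
    have hfin : I ≤ 1 / 2 * (J + I) + G := by
      calc I ≤ M * K ^ (a - 1) * (∫ x in Set.Ioc A R, φ (x / K))
              + ∫ x in Set.Ioc A R, x ^ (a - 1) * g x := by rw [← hsplit]; exact hmono
        _ ≤ M * K ^ (a - 1) * (K * ∫ x in Set.Ioc (A / K) (R / K), φ x) + G := by
            rw [hcov] at *
            have hM1 : 0 ≤ M * K ^ (a - 1) :=
              mul_nonneg hM0.le (Real.rpow_nonneg hK0.le _)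
            nlinarith [hgle]
        _ = M * K ^ (a - 1) * K * (∫ x in Set.Ioc (A / K) (R / K), φ x) + G := by ring
        _ ≤ 1 / 2 * (J + I) + G := by
            rw [hMK]
            have := le_trans hsub (le_of_eq hunion)
            linarith
    linarith
  -- conclude
  rw [show Set.Ici A = {A} ∪ Set.Ioi A by
    rw [Set.union_comm, Set.Ioi_union_left]]
  apply IntegrableOn.union
  · exact (integrableOn_singleton_iff).mpr (Or.inr (by simp [Real.volume_singleton]))
  · apply integrableOn_Ioi_of_intervalIntegral_norm_bounded (J + 2 * G) A
      (fun i : ℝ => hInt A i hAKA) Filter.tendsto_id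
    filter_upwards [Filter.eventually_ge_atTop A] with R hR
    rw [intervalIntegral.integral_of_le hR]
    have : (∫ x in Set.Ioc A R, ‖φ x‖) = ∫ x in Set.Ioc A R, φ x := by
      apply setIntegral_congr_fun measurableSet_Ioc
      intro x hx
      exact Real.norm_of_nonneg (hφ_nonneg x (le_trans hAKA hx.1.le))
    rw [this]
    exact key R hR
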